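/- Let P ∈ ℤ[X] be a monic polynomial of degree d ≥ 2 with constant term ε = P(0) ∈ {1, −1}, and suppose P is self-reciprocal in the sense that X^d · P(1/X) = ε · P(X) (equivalently, the coefficient reversal of P equals ε·P). Then the companion matrix C of P lies in GL(d,ℤ), and C is reversible in GL(d,ℤ): there exists G ∈ GL(d,ℤ) with G C G⁻¹ = C⁻¹. -/
import Mathlib


/-- The companion matrix of a monic integer polynomial `P` of degree `d`:
`1`'s on the subdiagonal, last column `(-c₀, …, -c_{d-1})ᵀ`, `0` elsewhere. -/
def companionMatrix (d : ℕ) (P : Polynomial ℤ) : Matrix (Fin d) (Fin d) ℤ :=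
  Matrix.of fun i j =>
    if (j : ℕ) = d - 1 then -P.coeff (i : ℕ)
    else if (i : ℕ) = (j : ℕ) + 1 then 1 else 0

/-- If `P ∈ ℤ[X]` is monic of degree `d ≥ 2` with constant term `ε = ±1` and
is self-reciprocal (`X^d P(1/X) = ε P(X)`, i.e. `P.reverse = ε • P`), then its
companion matrix lies in `GL(d,ℤ)` and is reversible there. -/
theorem stmt11 {d : ℕ} (hd : 2 ≤ d) (P : Polynomial ℤ) (hmonic : P.Monic)
    (hdeg : P.natDegree = d) (ε : ℤ) (hε : ε = P.coeff 0) (hεu : ε = 1 ∨ ε = -1)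
    (hsr : P.reverse = Polynomial.C ε * P) :
    ∃ Cu : GL (Fin d) ℤ,
      (Cu : Matrix (Fin d) (Fin d) ℤ) = companionMatrix d P ∧
      ∃ G : GL (Fin d) ℤ, G * Cu * G⁻¹ = Cu⁻¹ := by
  have hd0 : 0 < d := by omega
  have hεsq : ε * ε = 1 := by rcases hεu with h | h <;> simp [h]
  have hc0 : P.coeff 0 = ε := hε.symm
  have hcc : P.coeff 0 * P.coeff 0 = 1 := by rw [hc0]; exact hεsq
  have hrev : ∀ i, i ≤ d → P.coeff (d - i) = P.coeff 0 * P.coeff i := by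
    intro i hi
    have h1 := congrArg (fun q => Polynomial.coeff q i) hsr
    simp only [Polynomial.coeff_reverse, Polynomial.coeff_C_mul, hdeg,
      Polynomial.revAt_le hi] at h1
    rw [h1, hc0]
  set C : Matrix (Fin d) (Fin d) ℤ := companionMatrix d P with hCdef
  set J : Matrix (Fin d) (Fin d) ℤ :=
    Matrix.of (fun i j => if (i : ℕ) + (j : ℕ) = d - 1 then 1 else 0) with hJdef
  set M : Matrix (Fin d) (Fin d) ℤ :=
    Matrix.of (fun i j => if (j : ℕ) = 0 then -P.coeff (i : ℕ)
      else if (i : ℕ) + (j : ℕ) = d then 1 else 0) with hMdef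
  have hCentry : ∀ i j : Fin d, C i j =
      if (j : ℕ) = d - 1 then -P.coeff (i : ℕ)
      else if (i : ℕ) = (j : ℕ) + 1 then 1 else 0 := fun i j => rfl
  have hJentry : ∀ i j : Fin d, J i j = if (i : ℕ) + (j : ℕ) = d - 1 then 1 else 0 :=
    fun i j => rfl
  have hMentry : ∀ i j : Fin d, M i j = if (j : ℕ) = 0 then -P.coeff (i : ℕ)
      else if (i : ℕ) + (j : ℕ) = d then 1 else 0 := fun i j => rfl
  -- J * J = 1
  have hJJ : J * J = 1 := by
    ext i k
    have hi := i.isLt; have hk := k.isLt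
    obtain ⟨j₀, hj₀⟩ : ∃ j₀ : Fin d, (j₀ : ℕ) = d - 1 - (i : ℕ) := ⟨⟨_, by omega⟩, rfl⟩
    rw [Matrix.mul_apply, Finset.sum_eq_single j₀]
    · rw [hJentry i j₀, hJentry j₀ k, Matrix.one_apply,
        if_pos (show (i : ℕ) + (j₀ : ℕ) = d - 1 by omega), one_mul]
      by_cases hik : i = k
      · rw [if_pos (show (j₀ : ℕ) + (k : ℕ) = d - 1 by
            have := Fin.ext_iff.mp hik; omega), if_pos hik]
      · rw [if_neg (show ¬((j₀ : ℕ) + (k : ℕ) = d - 1) from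
            fun h => hik (Fin.ext (by omega))), if_neg hik]
    · intro b _ hb
      have hb' : (b : ℕ) ≠ (j₀ : ℕ) := fun h => hb (Fin.ext h)
      rw [hJentry i b, if_neg (show ¬((i : ℕ) + (b : ℕ) = d - 1) by omega), zero_mul]
    · intro h; exact absurd (Finset.mem_univ _) h
  -- C * J = M
  have hCJ : C * J = M := by
    ext i k
    have hi := i.isLt; have hk := k.isLt
    obtain ⟨j₀, hj₀⟩ : ∃ j₀ : Fin d, (j₀ : ℕ) = d - 1 - (k : ℕ) := ⟨⟨_, by omega⟩, rfl⟩
    rw [Matrix.mul_apply, Finset.sum_eq_single j₀]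
    · rw [hCentry i j₀, hJentry j₀ k, hMentry i k,
        if_pos (show (j₀ : ℕ) + (k : ℕ) = d - 1 by omega), mul_one]
      by_cases hk0 : (k : ℕ) = 0
      · rw [if_pos (show (j₀ : ℕ) = d - 1 by omega), if_pos hk0]
      · rw [if_neg (show ¬((j₀ : ℕ) = d - 1) by omega), if_neg hk0]
        by_cases hik : (i : ℕ) + (k : ℕ) = d
        · rw [if_pos (show (i : ℕ) = (j₀ : ℕ) + 1 by omega), if_pos hik]
        · rw [if_neg (show ¬((i : ℕ) = (j₀ : ℕ) + 1) by omega), if_neg hik]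
    · intro b _ hb
      have hb' : (b : ℕ) ≠ (j₀ : ℕ) := fun h => hb (Fin.ext h)
      rw [hJentry b k, if_neg (show ¬((b : ℕ) + (k : ℕ) = d - 1) by omega), mul_zero]
    · intro h; exact absurd (Finset.mem_univ _) h
  -- M * M = 1
  have hMM : M * M = 1 := by
    ext i k
    have hi := i.isLt; have hk := k.isLt
    rw [Matrix.mul_apply]
    by_cases hk0 : (k : ℕ) = 0
    · by_cases hi0 : (i : ℕ) = 0
      · obtain ⟨j₀, hj₀⟩ : ∃ j₀ : Fin d, (j₀ : ℕ) = 0 := ⟨⟨0, hd0⟩, rfl⟩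
        rw [Finset.sum_eq_single j₀]
        · rw [hMentry i j₀, hMentry j₀ k, Matrix.one_apply,
            if_pos (show (j₀ : ℕ) = 0 from hj₀),
            if_pos (show (k : ℕ) = 0 from hk0),
            if_pos (show i = k from Fin.ext (by omega))]
          rw [hi0, hj₀, neg_mul_neg, hcc]
        · intro b _ hb
          have hb' : (b : ℕ) ≠ (j₀ : ℕ) := fun h => hb (Fin.ext h)
          rw [hMentry i b, if_neg (show ¬((b : ℕ) = 0) by omega),
            if_neg (show ¬((i : ℕ) + (b : ℕ) = d) by omega), zero_mul]
        · intro h; exact absurd (Finset.mem_univ _) h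
      · -- two nonzero terms: j = 0 and j = d - i
        obtain ⟨a, ha⟩ : ∃ a : Fin d, (a : ℕ) = 0 := ⟨⟨0, hd0⟩, rfl⟩
        obtain ⟨b, hbv⟩ : ∃ b : Fin d, (b : ℕ) = d - (i : ℕ) := ⟨⟨_, by omega⟩, rfl⟩
        have hab : a ≠ b := by intro h; rw [h] at ha; omega
        rw [← Finset.sum_subset (Finset.subset_univ {a, b})
            (by
              intro x _ hx
              simp only [Finset.mem_insert, Finset.mem_singleton] at hx
              push_neg at hx
              have h1 : (x : ℕ) ≠ (a : ℕ) := fun h => hx.1 (Fin.ext h)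
              have h2 : (x : ℕ) ≠ (b : ℕ) := fun h => hx.2 (Fin.ext h)
              rw [hMentry i x, if_neg (show ¬((x : ℕ) = 0) by omega),
                if_neg (show ¬((i : ℕ) + (x : ℕ) = d) by omega), zero_mul]),
          Finset.sum_pair hab]
        rw [hMentry i a, hMentry a k, hMentry i b, hMentry b k, Matrix.one_apply,
          if_pos (show (a : ℕ) = 0 from ha),
          if_neg (show ¬((b : ℕ) = 0) by omega),
          if_pos (show (i : ℕ) + (b : ℕ) = d by omega),
          if_pos (show (k : ℕ) = 0 from hk0),
          if_pos (show (k : ℕ) = 0 from hk0),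
          if_neg (show ¬(i = k) from fun h => hi0 (by rw [Fin.ext_iff] at h; omega))]
        rw [ha, hbv, hrev (i : ℕ) (le_of_lt hi)]
        ring
    · -- single nonzero term: j = d - k
      obtain ⟨j₀, hj₀⟩ : ∃ j₀ : Fin d, (j₀ : ℕ) = d - (k : ℕ) := ⟨⟨_, by omega⟩, rfl⟩
      rw [Finset.sum_eq_single j₀]
      · rw [hMentry i j₀, hMentry j₀ k, Matrix.one_apply,
          if_neg (show ¬((j₀ : ℕ) = 0) by omega),
          if_neg (show ¬((k : ℕ) = 0) from hk0),
          if_pos (show (j₀ : ℕ) + (k : ℕ) = d by omega), mul_one]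
        by_cases hik : i = k
        · rw [if_pos (show (i : ℕ) + (j₀ : ℕ) = d by
              have := Fin.ext_iff.mp hik; omega), if_pos hik]
        · rw [if_neg (show ¬((i : ℕ) + (j₀ : ℕ) = d) from
              fun h => hik (Fin.ext (by omega))), if_neg hik]
      · intro b _ hb
        have hb' : (b : ℕ) ≠ (j₀ : ℕ) := fun h => hb (Fin.ext h)
        rw [hMentry b k, if_neg (show ¬((k : ℕ) = 0) from hk0),
          if_neg (show ¬((b : ℕ) + (k : ℕ) = d) by omega), mul_zero]
      · intro h; exact absurd (Finset.mem_univ _) h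
  -- assemble
  have hl : C * (J * C * J) = 1 := by
    have h1 : C * J * (C * J) = 1 := by rw [hCJ]; exact hMM
    calc C * (J * C * J) = C * J * (C * J) := by simp only [mul_assoc]
      _ = 1 := h1
  have hr : (J * C * J) * C = 1 := by
    calc (J * C * J) * C = (J * C * J) * C * (J * J) := by rw [hJJ, mul_one]
      _ = J * (C * J * (C * J)) * J := by simp only [mul_assoc]
      _ = J * J := by rw [hCJ, hMM, mul_one]
      _ = 1 := hJJ
  exact ⟨⟨C, J * C * J, hl, hr⟩, rfl, ⟨J, J, hJJ, hJJ⟩, Units.ext rfl⟩
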